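/- The polynomial $f = \sum_{j=2}^{n-1} (-1)^j x^{n+1-j} y^j$ does not belong to the ideal $(x^n, y^n, g)$ of $k[s,x,y]$, where $g = xy(x-y)(x+y-sy)$. Consequently, the colon ideal $((x^n,y^n,g) : f)$ equals the maximal ideal $(s,x,y)$. -/

import Mathlib

open MvPolynomial Finset

namespace Stmt9

/-- degree vector (0, a, b) -/
noncomputable def dv (a b : ℕ) : Fin 3 →₀ ℕ := Finsupp.single 1 a + Finsupp.single 2 b

lemma dv_le_dv {u v a b : ℕ} : dv u v ≤ dv a b ↔ u ≤ a ∧ v ≤ b := by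
  rw [dv, dv, Finsupp.le_def]
  constructor
  · intro h
    have h1 := h 1; have h2 := h 2
    simp [Finsupp.single_apply] at h1 h2
    exact ⟨h1, h2⟩
  · rintro ⟨h1, h2⟩ i
    fin_cases i <;> simp [Finsupp.single_apply] <;> omega

lemma dv_sub {u v a b : ℕ} : dv a b - dv u v = dv (a - u) (b - v) := by
  ext i
  fin_cases i <;> simp [dv, Finsupp.single_apply]

lemma dv_eq_dv {u v a b : ℕ} : dv u v = dv a b ↔ u = a ∧ v = b := by
  constructor
  · intro h
    have h1 := congrArg (fun f => f 1) h
    have h2 := congrArg (fun f => f 2) h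
    simp [dv, Finsupp.single_apply] at h1 h2
    exact ⟨h1, h2⟩
  · rintro ⟨rfl, rfl⟩; rfl

lemma single_le_dv {c u v a b : ℕ} (hc : c ≠ 0) :
    ¬ (Finsupp.single 0 c + dv u v ≤ dv a b) := by
  intro h
  rw [Finsupp.le_def] at h
  have := h 0
  simp [dv, Finsupp.single_apply] at this
  omega

lemma single1_le_dv {c a b : ℕ} : Finsupp.single 1 c ≤ dv a b ↔ c ≤ a := by
  rw [Finsupp.single_le_iff]
  simp [dv, Finsupp.single_apply]

lemma single2_le_dv {c a b : ℕ} : Finsupp.single 2 c ≤ dv a b ↔ c ≤ b := by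
  rw [Finsupp.single_le_iff]
  simp [dv, Finsupp.single_apply]

variable {k : Type*} [Field k]

lemma X_pow_mul_X_pow (u v : ℕ) :
    (X 1 : MvPolynomial (Fin 3) k) ^ u * X 2 ^ v = monomial (dv u v) 1 := by
  rw [X_pow_eq_monomial, X_pow_eq_monomial, monomial_mul, mul_one]; rfl

lemma sX_pow_mul_X_pow (u v : ℕ) :
    (X 0 : MvPolynomial (Fin 3) k) * X 1 ^ u * X 2 ^ v
      = monomial (Finsupp.single 0 1 + dv u v) 1 := by
  rw [X_pow_eq_monomial, X_pow_eq_monomial, X, mul_assoc, monomial_mul, monomial_mul,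
    mul_one, mul_one]
  rfl


/-- the separating functional -/
noncomputable def L (m : ℕ) (h : MvPolynomial (Fin 3) k) : k :=
  ∑ a ∈ Finset.Icc 1 m, coeff (dv (2 * a) (2 * (m + 1 - a))) h

lemma L_kill_x (m : ℕ) (p : MvPolynomial (Fin 3) k) :
    L m (p * X 1 ^ (2 * m + 1)) = 0 := by
  rw [L]
  refine Finset.sum_eq_zero fun a ha => ?_
  rw [mem_Icc] at ha
  rw [X_pow_eq_monomial, coeff_mul_monomial', if_neg]
  rw [single1_le_dv]
  omega

lemma L_kill_y (m : ℕ) (p : MvPolynomial (Fin 3) k) :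
    L m (p * X 2 ^ (2 * m + 1)) = 0 := by
  rw [L]
  refine Finset.sum_eq_zero fun a ha => ?_
  rw [mem_Icc] at ha
  rw [X_pow_eq_monomial, coeff_mul_monomial', if_neg]
  rw [single2_le_dv]
  omega

lemma L_kill_g (m : ℕ) (hm : 1 ≤ m) (p : MvPolynomial (Fin 3) k) :
    L m (p * (X 1 * X 2 * (X 1 - X 2) * (X 1 + X 2 - X 0 * X 2))) = 0 := by
  have hg : p * (X 1 * X 2 * (X 1 - X 2) * (X 1 + X 2 - X 0 * X 2))
      = p * (X 1 ^ 3 * X 2 ^ 1) - p * (X 1 ^ 1 * X 2 ^ 3)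
        + p * ((X 0 : MvPolynomial (Fin 3) k) * X 1 ^ 1 * X 2 ^ 3)
        - p * (X 0 * X 1 ^ 2 * X 2 ^ 2) := by ring
  rw [L, hg]
  simp only [coeff_sub, coeff_add, X_pow_mul_X_pow, sX_pow_mul_X_pow, coeff_mul_monomial']
  rw [Finset.sum_congr rfl (g := fun a =>
      (if a ∈ Finset.Icc 2 m then coeff (dv (2 * a - 3) (2 * (m + 1 - a) - 1)) p else 0)
      - if a ∈ Finset.Icc 1 (m - 1) then coeff (dv (2 * a - 1) (2 * (m + 1 - a) - 3)) p else 0)]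
  · rw [Finset.sum_sub_distrib, ← Finset.sum_filter, ← Finset.sum_filter]
    have e1 : (Finset.Icc 1 m).filter (· ∈ Finset.Icc 2 m) = Finset.Icc 2 m := by
      ext a; simp [mem_Icc, mem_filter]; omega
    have e2 : (Finset.Icc 1 m).filter (· ∈ Finset.Icc 1 (m - 1)) = Finset.Icc 1 (m - 1) := by
      ext a; simp [mem_Icc, mem_filter]; omega
    rw [e1, e2, sub_eq_zero]
    have e3 : Finset.Icc 2 m = (Finset.Icc 1 (m - 1)).map
        (addRightEmbedding 1) := by
      rw [Finset.map_add_right_Icc]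
      congr 1
      omega
    rw [e3, Finset.sum_map]
    refine Finset.sum_congr rfl fun a ha => ?_
    rw [mem_Icc] at ha
    have h1 : 2 * (addRightEmbedding 1 a) - 3 = 2 * a - 1 := by
      simp [addRightEmbedding]; omega
    have h2 : 2 * (m + 1 - addRightEmbedding 1 a) - 1 = 2 * (m + 1 - a) - 3 := by
      simp [addRightEmbedding]; omega
    rw [h1, h2]
  · intro a ha
    rw [mem_Icc] at ha
    have hd3 : ¬ (Finsupp.single 0 1 + dv 1 3 ≤ dv (2 * a) (2 * (m + 1 - a))) :=
      single_le_dv one_ne_zero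
    have hd4 : ¬ (Finsupp.single 0 1 + dv 2 2 ≤ dv (2 * a) (2 * (m + 1 - a))) :=
      single_le_dv one_ne_zero
    have hd1 : dv 3 1 ≤ dv (2 * a) (2 * (m + 1 - a)) ↔ 2 ≤ a := by
      rw [dv_le_dv]; omega
    have hd2 : dv 1 3 ≤ dv (2 * a) (2 * (m + 1 - a)) ↔ a ≤ m - 1 := by
      rw [dv_le_dv]; omega
    have hc1 : a ∈ Finset.Icc 2 m ↔ 2 ≤ a := by rw [mem_Icc]; omega
    have hc2 : a ∈ Finset.Icc 1 (m - 1) ↔ a ≤ m - 1 := by rw [mem_Icc]; omega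
    rw [if_neg hd3, if_neg hd4]
    simp only [dv_sub, hd1, hd2, hc1, hc2, mul_one]
    ring


lemma term_eq (j u v : ℕ) :
    (-1 : MvPolynomial (Fin 3) k) ^ j * X 1 ^ u * X 2 ^ v
      = monomial (dv u v) ((-1 : k) ^ j) := by
  rw [mul_assoc, X_pow_mul_X_pow]
  rw [show (-1 : MvPolynomial (Fin 3) k) = C (-1 : k) by simp, ← C_pow, C_mul_monomial, mul_one]

lemma L_f (m : ℕ) (hm : 1 ≤ m) :
    L m (∑ j ∈ Finset.Icc 2 (2 * m + 1 - 1),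
      (-1 : MvPolynomial (Fin 3) k) ^ j * X 1 ^ (2 * m + 1 + 1 - j) * X 2 ^ j) = (m : k) := by
  rw [L]
  have key : ∀ a ∈ Finset.Icc 1 m,
      coeff (dv (2 * a) (2 * (m + 1 - a)))
        (∑ j ∈ Finset.Icc 2 (2 * m + 1 - 1),
          (-1 : MvPolynomial (Fin 3) k) ^ j * X 1 ^ (2 * m + 1 + 1 - j) * X 2 ^ j) = 1 := by
    intro a ha
    rw [mem_Icc] at ha
    rw [coeff_sum]
    simp only [term_eq, coeff_monomial]
    rw [Finset.sum_congr rfl (g := fun j => if j = 2 * (m + 1 - a) then (1 : k) else 0)]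
    · rw [Finset.sum_ite_eq' (Finset.Icc 2 (2 * m + 1 - 1)) (2 * (m + 1 - a)) (fun _ => (1:k)),
        if_pos (by rw [mem_Icc]; omega)]
    · intro j hj
      rw [mem_Icc] at hj
      by_cases h : j = 2 * (m + 1 - a)
      · rw [if_pos, if_pos h]
        · subst h
          rw [show 2 * (m + 1 - a) = 2 * ((m + 1 - a)) from rfl]
          rw [pow_mul]
          norm_num
        · rw [dv_eq_dv]; omega
      · rw [if_neg, if_neg h]
        rw [dv_eq_dv]; omega
  rw [Finset.sum_congr rfl key, Finset.sum_const, Nat.card_Icc]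
  simp


lemma L_kill_I (m : ℕ) (hm : 1 ≤ m) {h : MvPolynomial (Fin 3) k}
    (hh : h ∈ Ideal.span {(X 1 : MvPolynomial (Fin 3) k) ^ (2 * m + 1), X 2 ^ (2 * m + 1),
      X 1 * X 2 * (X 1 - X 2) * (X 1 + X 2 - X 0 * X 2)}) :
    L m h = 0 := by
  have main : ∀ (x : MvPolynomial (Fin 3) k), x ∈ Ideal.span
      {(X 1 : MvPolynomial (Fin 3) k) ^ (2 * m + 1), X 2 ^ (2 * m + 1),
        X 1 * X 2 * (X 1 - X 2) * (X 1 + X 2 - X 0 * X 2)} →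
      ∀ p : MvPolynomial (Fin 3) k, L m (p * x) = 0 := by
    intro x hx
    refine Submodule.span_induction ?_ ?_ ?_ ?_ hx
    · intro z hz p
      simp only [Set.mem_insert_iff, Set.mem_singleton_iff] at hz
      rcases hz with rfl | rfl | rfl
      · exact L_kill_x m p
      · exact L_kill_y m p
      · exact L_kill_g m hm p
    · intro p
      rw [mul_zero, L]
      simp
    · intro a b _ _ ha hb p
      have : L m (p * (a + b)) = L m (p * a) + L m (p * b) := by
        rw [mul_add, L, L, L, ← Finset.sum_add_distrib]
        simp [coeff_add]
      rw [this, ha, hb, add_zero]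
    · intro a z _ hz p
      rw [smul_eq_mul, show p * (a * z) = (p * a) * z by ring]
      exact hz (p * a)
  have := main h hh 1
  rwa [one_mul] at this

noncomputable def fM (M : ℕ) : MvPolynomial (Fin 3) k :=
  ∑ j ∈ Finset.Icc 2 (2 * M), (-1) ^ j * X 1 ^ (2 * M + 2 - j) * X 2 ^ j

lemma frec (M : ℕ) (hM : 1 ≤ M) :
    fM (M + 1) (k := k) = X 1 ^ 2 * fM M - X 1 ^ 3 * X 2 ^ (2 * M + 1)
      + X 1 ^ 2 * X 2 ^ (2 * M + 2) := by
  rw [fM, fM, Finset.mul_sum]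
  rw [show 2 * (M + 1) = (2 * M + 1) + 1 by ring]
  rw [Finset.sum_Icc_succ_top (by omega), Finset.sum_Icc_succ_top (by omega)]
  rw [Finset.sum_congr rfl
    (g := fun j => X 1 ^ 2 * ((-1) ^ j * X 1 ^ (2 * M + 2 - j) * X 2 ^ j)) ?_]
  · rw [show (-1 : MvPolynomial (Fin 3) k) ^ (2 * M + 1) = -1 from Odd.neg_one_pow ⟨M, by ring⟩,
      show (-1 : MvPolynomial (Fin 3) k) ^ (2 * M + 1 + 1) = 1 from
        Even.neg_one_pow ⟨M + 1, by ring⟩,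
      show 2 * M + 1 + 1 + 2 - (2 * M + 1) = 3 by omega,
      show 2 * M + 1 + 1 + 2 - (2 * M + 1 + 1) = 2 by omega,
      show 2 * M + 1 + 1 = 2 * M + 2 by ring]
    ring
  · intro j hj
    rw [mem_Icc] at hj
    rw [show 2 * M + 1 + 1 + 2 - j = 2 + (2 * M + 2 - j) by omega, pow_add]
    ring

lemma KS (M : ℕ) (hM : 1 ≤ M) :
    (X 0 : MvPolynomial (Fin 3) k) * fM M
      = X 1 ^ (2 * M + 1) * X 2 + (X 0 - 1) * X 1 * X 2 ^ (2 * M + 1)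
        - (∑ j ∈ Finset.range M, X 1 ^ (2 * j) * X 2 ^ (2 * M - 2 - 2 * j))
          * (X 1 * X 2 * (X 1 - X 2) * (X 1 + X 2 - X 0 * X 2)) := by
  induction M, hM using Nat.le_induction with
  | base =>
    rw [fM]
    norm_num
    ring
  | succ M hM ih =>
    rw [frec M hM, Finset.sum_range_succ' (fun j => X 1 ^ (2 * j) * X 2 ^ (2 * (M + 1) - 2 - 2 * j))]
    have hs : ∀ j ∈ Finset.range M,
        (X 1 : MvPolynomial (Fin 3) k) ^ (2 * (j + 1)) * X 2 ^ (2 * (M + 1) - 2 - 2 * (j + 1))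
          = X 1 ^ 2 * (X 1 ^ (2 * j) * X 2 ^ (2 * M - 2 - 2 * j)) := by
      intro j hj
      rw [Finset.mem_range] at hj
      rw [show 2 * (M + 1) - 2 - 2 * (j + 1) = 2 * M - 2 - 2 * j by omega,
        show 2 * (j + 1) = 2 + 2 * j by ring, pow_add]
      ring
    rw [Finset.sum_congr rfl hs, ← Finset.mul_sum]
    set S := ∑ j ∈ Finset.range M,
      (X 1 : MvPolynomial (Fin 3) k) ^ (2 * j) * X 2 ^ (2 * M - 2 - 2 * j) with hS
    rw [show 2 * (M + 1) - 2 - 2 * 0 = 2 * M by omega]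
    linear_combination (X 1 ^ 2 : MvPolynomial (Fin 3) k) * ih

lemma KI (M : ℕ) (hM : 1 ≤ M) :
    fM M (k := k) = (∑ i ∈ Finset.Icc 1 (M - 1), (X 1 - X 2) * X 1 ^ (2 * M + 1 - 2 * i)
      * X 2 ^ (2 * i)) + X 1 ^ 2 * X 2 ^ (2 * M) := by
  induction M, hM using Nat.le_induction with
  | base =>
    rw [fM]
    norm_num
  | succ M hM ih =>
    rw [frec M hM, ih, show M + 1 - 1 = (M - 1) + 1 by omega,
      Finset.sum_Icc_succ_top (by omega : 1 ≤ M - 1 + 1)]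
    have hs : ∀ i ∈ Finset.Icc 1 (M - 1),
        (X 1 - X 2 : MvPolynomial (Fin 3) k) * X 1 ^ (2 * (M + 1) + 1 - 2 * i) * X 2 ^ (2 * i)
          = X 1 ^ 2 * ((X 1 - X 2) * X 1 ^ (2 * M + 1 - 2 * i) * X 2 ^ (2 * i)) := by
      intro i hi
      rw [mem_Icc] at hi
      rw [show 2 * (M + 1) + 1 - 2 * i = 2 + (2 * M + 1 - 2 * i) by omega, pow_add]
      ring
    rw [Finset.sum_congr rfl hs, ← Finset.mul_sum,
      show M - 1 + 1 = M by omega,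
      show 2 * (M + 1) + 1 - 2 * M = 3 by omega,
      show 2 * (M + 1) = 2 * M + 2 by ring]
    ring

/-- key reduction: `w x^j y^l ∈ (g, y^(j+l+1))` where `w = xy(x-y)`. -/
lemma redB (j l : ℕ) :
    (X 1 * X 2 * (X 1 - X 2) : MvPolynomial (Fin 3) k) * X 1 ^ j * X 2 ^ l ∈
      Ideal.span {X 1 * X 2 * (X 1 - X 2) * (X 1 + X 2 - X 0 * X 2),
        (X 2 : MvPolynomial (Fin 3) k) ^ (j + l + 1)} := by
  induction j generalizing l with
  | zero =>
    have he : (X 1 * X 2 * (X 1 - X 2) : MvPolynomial (Fin 3) k) * X 1 ^ 0 * X 2 ^ l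
        = (X 1 * (X 1 - X 2)) * X 2 ^ (0 + l + 1) := by
      rw [pow_succ']
      ring
    rw [he]
    exact Ideal.mul_mem_left _ _ (Ideal.subset_span (by simp))
  | succ j ih =>
    have he : (X 1 * X 2 * (X 1 - X 2) : MvPolynomial (Fin 3) k) * X 1 ^ (j + 1) * X 2 ^ l
        = X 1 ^ j * X 2 ^ l * (X 1 * X 2 * (X 1 - X 2) * (X 1 + X 2 - X 0 * X 2))
          + (X 0 - 1) * (X 1 * X 2 * (X 1 - X 2) * X 1 ^ j * X 2 ^ (l + 1)) := by
      rw [pow_succ, pow_succ]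
      ring
    rw [he]
    refine Ideal.add_mem _ (Ideal.mul_mem_left _ _ (Ideal.subset_span (by simp))) ?_
    have := Ideal.mul_mem_left _ ((X 0 : MvPolynomial (Fin 3) k) - 1) (ih (l + 1))
    rwa [show j + (l + 1) + 1 = j + 1 + l + 1 by omega] at this

lemma span_sub (m : ℕ) :
    Ideal.span {X 1 * X 2 * (X 1 - X 2) * (X 1 + X 2 - X 0 * X 2),
        (X 2 : MvPolynomial (Fin 3) k) ^ (2 * m + 1)} ≤
      Ideal.span {(X 1 : MvPolynomial (Fin 3) k) ^ (2 * m + 1), X 2 ^ (2 * m + 1),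
        X 1 * X 2 * (X 1 - X 2) * (X 1 + X 2 - X 0 * X 2)} := by
  apply Ideal.span_mono
  intro z hz
  simp only [Set.mem_insert_iff, Set.mem_singleton_iff] at hz ⊢
  tauto

lemma mem_s (m : ℕ) (hm : 1 ≤ m) :
    (X 0 : MvPolynomial (Fin 3) k) * fM m ∈
      Ideal.span {(X 1 : MvPolynomial (Fin 3) k) ^ (2 * m + 1), X 2 ^ (2 * m + 1),
        X 1 * X 2 * (X 1 - X 2) * (X 1 + X 2 - X 0 * X 2)} := by
  rw [KS m hm]
  refine Ideal.sub_mem _ (Ideal.add_mem _ ?_ ?_) ?_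
  · exact Ideal.mul_mem_right _ _ (Ideal.subset_span (by simp))
  · exact Ideal.mul_mem_left _ _ (Ideal.subset_span (by simp))
  · exact Ideal.mul_mem_left _ _ (Ideal.subset_span (by simp))

lemma mem_y (m : ℕ) (hm : 1 ≤ m) :
    (X 2 : MvPolynomial (Fin 3) k) * fM m ∈
      Ideal.span {(X 1 : MvPolynomial (Fin 3) k) ^ (2 * m + 1), X 2 ^ (2 * m + 1),
        X 1 * X 2 * (X 1 - X 2) * (X 1 + X 2 - X 0 * X 2)} := by
  rw [KI m hm, mul_add, Finset.mul_sum]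
  refine Ideal.add_mem _ (Ideal.sum_mem _ fun i hi => ?_) ?_
  · rw [mem_Icc] at hi
    have he : (X 2 : MvPolynomial (Fin 3) k) *
        ((X 1 - X 2) * X 1 ^ (2 * m + 1 - 2 * i) * X 2 ^ (2 * i))
        = X 1 * X 2 * (X 1 - X 2) * X 1 ^ (2 * m - 2 * i) * X 2 ^ (2 * i) := by
      rw [show 2 * m + 1 - 2 * i = (2 * m - 2 * i) + 1 by omega, pow_succ]
      ring
    rw [he]
    refine span_sub m ?_
    have := redB (k := k) (2 * m - 2 * i) (2 * i)
    rwa [show 2 * m - 2 * i + 2 * i + 1 = 2 * m + 1 by omega] at this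
  · have he : (X 2 : MvPolynomial (Fin 3) k) * (X 1 ^ 2 * X 2 ^ (2 * m))
        = X 1 ^ 2 * X 2 ^ (2 * m + 1) := by
      rw [pow_succ]
      ring
    rw [he]
    exact Ideal.mul_mem_left _ _ (Ideal.subset_span (by simp))

lemma mem_x (m : ℕ) (hm : 1 ≤ m) :
    (X 1 : MvPolynomial (Fin 3) k) * fM m ∈
      Ideal.span {(X 1 : MvPolynomial (Fin 3) k) ^ (2 * m + 1), X 2 ^ (2 * m + 1),
        X 1 * X 2 * (X 1 - X 2) * (X 1 + X 2 - X 0 * X 2)} := by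
  rw [KI m hm, mul_add, Finset.mul_sum]
  refine Ideal.add_mem _ (Ideal.sum_mem _ fun i hi => ?_) ?_
  · rw [mem_Icc] at hi
    have he : (X 1 : MvPolynomial (Fin 3) k) *
        ((X 1 - X 2) * X 1 ^ (2 * m + 1 - 2 * i) * X 2 ^ (2 * i))
        = X 1 * X 2 * (X 1 - X 2) * X 1 ^ (2 * m + 1 - 2 * i) * X 2 ^ (2 * i - 1) := by
      generalize 2 * m + 1 - 2 * i = a
      generalize hb : 2 * i - 1 = b
      rw [show 2 * i = b + 1 by omega, pow_succ]
      ring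
    rw [he]
    refine span_sub m ?_
    have := redB (k := k) (2 * m + 1 - 2 * i) (2 * i - 1)
    rwa [show 2 * m + 1 - 2 * i + (2 * i - 1) + 1 = 2 * m + 1 by omega] at this
  · have he : (X 1 : MvPolynomial (Fin 3) k) * (X 1 ^ 2 * X 2 ^ (2 * m))
        = X 2 ^ (2 * m - 1) * (X 1 * X 2 * (X 1 - X 2) * (X 1 + X 2 - X 0 * X 2))
          + X 0 * X 1 ^ 2 * X 2 ^ (2 * m + 1) - (X 0 - 1) * X 1 * (X 2 * X 2 ^ (2 * m + 1)) := by
      obtain ⟨e, he2⟩ : ∃ e, 2 * m = e + 1 := ⟨2 * m - 1, by omega⟩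
      rw [he2]
      rw [show e + 1 - 1 = e by omega]
      ring
    rw [he]
    refine Ideal.sub_mem _ (Ideal.add_mem _ ?_ ?_) ?_
    · exact Ideal.mul_mem_left _ _ (Ideal.subset_span (by simp))
    · exact Ideal.mul_mem_left _ _ (Ideal.subset_span (by simp))
    · exact Ideal.mul_mem_left _ _ (Ideal.mul_mem_left _ _ (Ideal.subset_span (by simp)))

lemma span_vars_mul (m : ℕ) (hm : 1 ≤ m) {q : MvPolynomial (Fin 3) k}
    (hq : q ∈ Ideal.span {(X 0 : MvPolynomial (Fin 3) k), X 1, X 2}) :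
    q * fM m ∈ Ideal.span {(X 1 : MvPolynomial (Fin 3) k) ^ (2 * m + 1), X 2 ^ (2 * m + 1),
      X 1 * X 2 * (X 1 - X 2) * (X 1 + X 2 - X 0 * X 2)} := by
  refine Submodule.span_induction ?_ ?_ ?_ ?_ hq
  · intro z hz
    simp only [Set.mem_insert_iff, Set.mem_singleton_iff] at hz
    rcases hz with rfl | rfl | rfl
    · exact mem_s m hm
    · exact mem_x m hm
    · exact mem_y m hm
  · rw [zero_mul]
    exact Ideal.zero_mem _
  · intro a b _ _ ha hb
    rw [add_mul]
    exact Ideal.add_mem _ ha hb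
  · intro a z _ hz
    rw [smul_eq_mul]
    simpa only [mul_assoc] using Ideal.mul_mem_left _ a hz

lemma vars_set_eq : ({X 0, X 1, X 2} : Set (MvPolynomial (Fin 3) k)) = X '' Set.univ := by
  ext q
  simp only [Set.mem_insert_iff, Set.mem_singleton_iff, Set.image_univ, Set.mem_range]
  constructor
  · rintro (rfl | rfl | rfl)
    exacts [⟨0, rfl⟩, ⟨1, rfl⟩, ⟨2, rfl⟩]
  · rintro ⟨i, rfl⟩
    fin_cases i <;> simp

lemma zero_constant_mem {p : MvPolynomial (Fin 3) k} (hp : constantCoeff p = 0) :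
    p ∈ Ideal.span {(X 0 : MvPolynomial (Fin 3) k), X 1, X 2} := by
  rw [vars_set_eq, mem_ideal_span_X_image]
  intro d hd
  rw [mem_support_iff] at hd
  have hdne : d ≠ 0 := by
    rintro rfl
    rw [← constantCoeff_eq] at hd
    exact hd hp
  obtain ⟨i, hi⟩ := Finsupp.ne_iff.mp hdne
  exact ⟨i, Set.mem_univ i, by simpa using hi⟩

end Stmt9

open Stmt9 in
/-- `f ∉ (x^n, y^n, g)`, and consequently `((x^n,y^n,g) : f) = (s,x,y)`. -/
theorem stmt_9 (k : Type*) [Field k] (m n : ℕ) (hm : 4 ≤ m) (hchar : (m : k) ≠ 0)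
    (hn : n = 2 * m + 1) :
    (∑ j ∈ Finset.Icc 2 (n - 1),
        (-1 : MvPolynomial (Fin 3) k) ^ j * X 1 ^ (n + 1 - j) * X 2 ^ j) ∉
      Ideal.span {(X 1 : MvPolynomial (Fin 3) k) ^ n, X 2 ^ n,
        X 1 * X 2 * (X 1 - X 2) * (X 1 + X 2 - X 0 * X 2)} ∧
    Submodule.colon
        (Ideal.span {(X 1 : MvPolynomial (Fin 3) k) ^ n, X 2 ^ n,
          X 1 * X 2 * (X 1 - X 2) * (X 1 + X 2 - X 0 * X 2)})
        (Ideal.span {∑ j ∈ Finset.Icc 2 (n - 1),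
          (-1 : MvPolynomial (Fin 3) k) ^ j * X 1 ^ (n + 1 - j) * X 2 ^ j}) =
      Ideal.span {(X 0 : MvPolynomial (Fin 3) k), X 1, X 2} := by
  subst hn
  have hm1 : 1 ≤ m := by omega
  have hfm : (∑ j ∈ Finset.Icc 2 (2 * m + 1 - 1),
      (-1 : MvPolynomial (Fin 3) k) ^ j * X 1 ^ (2 * m + 1 + 1 - j) * X 2 ^ j) = fM m := by
    rw [fM]
    exact Finset.sum_congr (by norm_num) fun j hj => rfl
  have hnot : fM m (k := k) ∉ Ideal.span {(X 1 : MvPolynomial (Fin 3) k) ^ (2 * m + 1),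
      X 2 ^ (2 * m + 1), X 1 * X 2 * (X 1 - X 2) * (X 1 + X 2 - X 0 * X 2)} := by
    intro hmem
    apply hchar
    rw [← L_f m hm1, hfm]
    exact L_kill_I m hm1 hmem
  constructor
  · rw [hfm]
    exact hnot
  · apply le_antisymm
    · intro p hp
      have hpf : p * fM m ∈ Ideal.span {(X 1 : MvPolynomial (Fin 3) k) ^ (2 * m + 1),
          X 2 ^ (2 * m + 1), X 1 * X 2 * (X 1 - X 2) * (X 1 + X 2 - X 0 * X 2)} := by
        have := Ideal.mem_colon_span_singleton.mp hp
        rwa [hfm] at this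
      set c := constantCoeff p with hc
      have hsub : p - C c ∈ Ideal.span {(X 0 : MvPolynomial (Fin 3) k), X 1, X 2} :=
        zero_constant_mem (by simp [hc])
      have hCc : C c * fM m (k := k) ∈ Ideal.span {(X 1 : MvPolynomial (Fin 3) k) ^ (2 * m + 1),
          X 2 ^ (2 * m + 1), X 1 * X 2 * (X 1 - X 2) * (X 1 + X 2 - X 0 * X 2)} := by
        have h2 := span_vars_mul m hm1 hsub
        have h3 : C c * fM m (k := k) = p * fM m - (p - C c) * fM m := by ring
        rw [h3]
        exact Ideal.sub_mem _ hpf h2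
      by_cases hc0 : c = 0
      · rw [hc0, map_zero, sub_zero] at hsub
        exact hsub
      · exfalso
        apply hnot
        have : fM m (k := k) = C c⁻¹ * (C c * fM m) := by
          rw [← mul_assoc, ← C_mul, inv_mul_cancel₀ hc0, C_1, one_mul]
        rw [this]
        exact Ideal.mul_mem_left _ _ hCc
    · rw [Ideal.span_le]
      intro z hz
      simp only [Set.mem_insert_iff, Set.mem_singleton_iff] at hz
      have key : ∀ w : MvPolynomial (Fin 3) k,
          w * fM m ∈ Ideal.span {(X 1 : MvPolynomial (Fin 3) k) ^ (2 * m + 1),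
            X 2 ^ (2 * m + 1), X 1 * X 2 * (X 1 - X 2) * (X 1 + X 2 - X 0 * X 2)} →
          w ∈ Submodule.colon
            (Ideal.span {(X 1 : MvPolynomial (Fin 3) k) ^ (2 * m + 1), X 2 ^ (2 * m + 1),
              X 1 * X 2 * (X 1 - X 2) * (X 1 + X 2 - X 0 * X 2)})
            (Ideal.span {∑ j ∈ Finset.Icc 2 (2 * m + 1 - 1),
              (-1 : MvPolynomial (Fin 3) k) ^ j * X 1 ^ (2 * m + 1 + 1 - j) * X 2 ^ j}) := by
        intro w hw
        rw [Ideal.mem_colon_span_singleton, hfm]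
        exact hw
      rcases hz with rfl | rfl | rfl
      · exact key _ (mem_s m hm1)
      · exact key _ (mem_x m hm1)
      · exact key _ (mem_y m hm1)
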